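/- Let q ≥ 3 be an odd integer and let H₁ be the additive submonoid of ℕ generated by {q-1, q, q+1}. Then the complement ℕ \ H₁ is finite with exactly (q-1)^2/4 elements, and H₁ is symmetric: for every natural number n with 0 ≤ n ≤ (q-1)^2/2 - 1, one has n ∈ H₁ if and only if (q-1)^2/2 - 1 - n ∉ H₁. -/

import Mathlib

private def Pp (m n : ℕ) : Prop := ∃ k : ℕ, k * (2*m) ≤ n ∧ n ≤ k * (2*m+2)

private lemma sum_odd (m : ℕ) : ∑ k ∈ Finset.range m, (2*k+1) = m^2 := by
  induction m with
  | zero => simp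
  | succ n ih => rw [Finset.sum_range_succ, ih]; ring

private lemma pp_large {m : ℕ} (hm : 1 ≤ m) {n : ℕ} (hn : 2*m^2 ≤ n) : Pp m n := by
  refine ⟨n / (2*m), Nat.div_mul_le_self n (2*m), ?_⟩
  have h2m : 0 < 2*m := by omega
  have hk : m ≤ n / (2*m) := (Nat.le_div_iff_mul_le h2m).2 (by nlinarith)
  have hmod := Nat.div_add_mod n (2*m)
  have hlt := Nat.mod_lt n h2m
  nlinarith [hmod, hlt, hk]

private lemma F_gap {m : ℕ} (hm : 1 ≤ m) : ¬ Pp m (2*m^2 - 1) := by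
  rintro ⟨k, h1, h2⟩
  have hm2 : 1 ≤ m^2 := Nat.one_le_pow 2 m (by omega)
  have hF1 : 2*m^2 - 1 + 1 = 2*m^2 := by generalize m^2 = x at hm2 ⊢; omega
  rcases le_or_gt m k with h | h
  · have := mul_le_mul_left h (2*m)
    nlinarith [h1, hF1]
  · have := mul_le_mul_left (show k + 1 ≤ m by omega) (2*m+2)
    nlinarith [h2, hF1]

private lemma pp_symm {m : ℕ} (hm : 1 ≤ m) {n : ℕ} (hn : n ≤ 2*m^2 - 1)
    (hnp : ¬ Pp m n) : Pp m (2*m^2 - 1 - n) := by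
  have hm2 : 1 ≤ m^2 := Nat.one_le_pow 2 m (by omega)
  have hF1 : 2*m^2 - 1 + 1 = 2*m^2 := by generalize m^2 = x at hm2 ⊢; omega
  have h2m : 0 < 2*m := by omega
  obtain ⟨k, hk⟩ : ∃ k, k = n / (2*m) := ⟨_, rfl⟩
  obtain ⟨c, hc⟩ : ∃ c, c = n % (2*m) := ⟨_, rfl⟩
  have hk1 : k * (2*m) ≤ n := by rw [hk]; exact Nat.div_mul_le_self n (2*m)
  have hdm : 2*m*k + c = n := by rw [hk, hc]; exact Nat.div_add_mod n (2*m)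
  have hr : c < 2*m := by rw [hc]; exact Nat.mod_lt n h2m
  clear hk hc
  have hgt : k*(2*m+2) + 1 ≤ n := by
    by_contra h
    push_neg at h
    exact hnp ⟨k, hk1, Nat.lt_add_one_iff.mp h⟩
  have hklt : k + 1 ≤ m := by
    by_contra h
    push_neg at h
    have := mul_le_mul_left (show m ≤ k by omega) (2*m+2)
    nlinarith [hgt, hn, hF1]
  obtain ⟨j, hj⟩ : ∃ j, m = k + 1 + j := ⟨m - k - 1, by omega⟩
  subst hj
  refine ⟨j, ?_, ?_⟩
  · have key : j*(2*(k+1+j)) + n + 1 ≤ 2*(k+1+j)^2 := by nlinarith [hdm, hr]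
    exact Nat.le_sub_of_add_le (by linarith [hF1])
  · have key : 2*(k+1+j)^2 ≤ j*(2*(k+1+j)+2) + n + 1 := by nlinarith [hgt]
    exact Nat.sub_le_iff_le_add.mpr (by linarith [hF1])

private lemma pp_mem {m : ℕ} (hm : 1 ≤ m)
    (n : ℕ) :
    n ∈ AddSubmonoid.closure ({2*m, 2*m+1, 2*m+2} : Set ℕ) ↔ Pp m n := by
  constructor
  · intro h
    refine AddSubmonoid.closure_induction ?_ ⟨0, by simp, by simp⟩ ?_ h
    · rintro x (rfl | rfl | rfl)
      · exact ⟨1, by omega, by omega⟩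
      · exact ⟨1, by omega, by omega⟩
      · exact ⟨1, by omega, by omega⟩
    · rintro x y _ _ ⟨k1, ha1, ha2⟩ ⟨k2, hb1, hb2⟩
      refine ⟨k1 + k2, ?_, ?_⟩ <;> [skip; skip] <;>
        · rw [add_mul]; omega
  · rintro ⟨k, h1, h2⟩
    have g1 : (2*m : ℕ) ∈ AddSubmonoid.closure ({2*m, 2*m+1, 2*m+2} : Set ℕ) :=
      AddSubmonoid.subset_closure (by simp)
    have g2 : (2*m+1 : ℕ) ∈ AddSubmonoid.closure ({2*m, 2*m+1, 2*m+2} : Set ℕ) :=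
      AddSubmonoid.subset_closure (by simp)
    have g3 : (2*m+2 : ℕ) ∈ AddSubmonoid.closure ({2*m, 2*m+1, 2*m+2} : Set ℕ) :=
      AddSubmonoid.subset_closure (by simp)
    set r := n - k * (2*m) with hrdef
    have hn : k * (2*m) + r = n := Nat.add_sub_cancel' h1
    have hk22 : k * (2*m+2) = k*(2*m) + 2*k := by ring
    have hr2k : r ≤ 2*k := by rw [hk22] at h2; omega
    rcases le_or_gt r k with hrk | hrk
    · obtain ⟨s, hs⟩ : ∃ s, k = r + s := ⟨k - r, by omega⟩
      have hval : s*(2*m) + r*(2*m+1) = n := by rw [← hn, hs]; ring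
      rw [← hval]
      exact AddSubmonoid.add_mem _ (by simpa using AddSubmonoid.nsmul_mem _ g1 s) (by simpa using AddSubmonoid.nsmul_mem _ g2 r)
    · obtain ⟨a, ha⟩ : ∃ a, 2*k - r = a := ⟨2*k - r, rfl⟩
      obtain ⟨b, hb⟩ : ∃ b, r - k = b := ⟨r - k, rfl⟩
      have hab : a + b = k := by omega
      have hkb : k + b = r := by omega
      have hval : a*(2*m+1) + b*(2*m+2) = n := by rw [← hn, ← hkb, ← hab]; ring
      rw [← hval]
      exact AddSubmonoid.add_mem _ (by simpa using AddSubmonoid.nsmul_mem _ g2 a) (by simpa using AddSubmonoid.nsmul_mem _ g3 b)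


set_option maxHeartbeats 1600000 in
/-- Let `q ≥ 3` be odd and `H₁` the additive submonoid of `ℕ` generated by
`{q-1, q, q+1}`. Then the set of gaps `ℕ \ H₁` is finite with exactly `(q-1)^2/4`
elements, and `H₁` is symmetric: for every `n ≤ (q-1)^2/2 - 1` one has
`n ∈ H₁ ↔ (q-1)^2/2 - 1 - n ∉ H₁`. -/
theorem semigroup_qm1_q_qp1_symmetric_with_genus
    (q : ℕ) (hq : 3 ≤ q) (hodd : Odd q)
    (H₁ : AddSubmonoid ℕ)
    (hH₁ : H₁ = AddSubmonoid.closure ({q - 1, q, q + 1} : Set ℕ)) :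
    {n : ℕ | n ∉ H₁}.Finite ∧
    {n : ℕ | n ∉ H₁}.ncard = (q - 1) ^ 2 / 4 ∧
    ∀ n : ℕ, n ≤ (q - 1) ^ 2 / 2 - 1 →
      (n ∈ H₁ ↔ (q - 1) ^ 2 / 2 - 1 - n ∉ H₁) := by
  obtain ⟨t, ht⟩ := hodd
  obtain ⟨m, hm, hqm⟩ : ∃ m, 1 ≤ m ∧ q = 2*m + 1 := ⟨t, by omega, by omega⟩
  have hm2 : 1 ≤ m^2 := Nat.one_le_pow 2 m (by omega)
  have hq1 : q - 1 = 2*m := by omega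
  have hq4 : (q - 1)^2 / 4 = m^2 := by
    rw [hq1]
    have : (2*m)^2 = m^2 * 4 := by ring
    rw [this, Nat.mul_div_cancel _ (by norm_num)]
  have hq2 : (q - 1)^2 / 2 - 1 = 2*m^2 - 1 := by
    rw [hq1]
    have : (2*m)^2 = (2*m^2) * 2 := by ring
    rw [this, Nat.mul_div_cancel _ (by norm_num)]
  have hgen : ({q - 1, q, q + 1} : Set ℕ) = ({2*m, 2*m+1, 2*m+2} : Set ℕ) := by
    rw [hq1, hqm]
  have hmem : ∀ n : ℕ, n ∈ H₁ ↔ Pp m n := by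
    intro n
    rw [hH₁, hgen]
    exact pp_mem hm n
  -- the finset of members below 2*m^2
  obtain ⟨S, hSdef⟩ : ∃ S : Finset ℕ, S = (Finset.range m).biUnion
      (fun k => Finset.Ico (k*(2*m)) (k*(2*m+2)+1)) := ⟨_, rfl⟩
  have hS_sub : S ⊆ Finset.range (2*m^2) := by
    intro x hx
    simp only [hSdef, Finset.mem_biUnion, Finset.mem_range, Finset.mem_Ico] at hx ⊢
    obtain ⟨k, hk, _, h2⟩ := hx
    have := mul_le_mul_left (show k + 1 ≤ m from hk) (2*m+2)
    nlinarith
  have hS_card : S.card = m^2 := by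
    rw [hSdef, Finset.card_biUnion]
    · rw [← sum_odd m]
      refine Finset.sum_congr rfl fun k _ => ?_
      rw [Nat.card_Ico]
      have h : k*(2*m+2) = k*(2*m) + 2*k := by ring
      rw [h, add_assoc, Nat.add_sub_cancel_left]
    · intro i hi j hj hij
      simp only [Finset.mem_coe, Finset.mem_range] at hi hj
      rw [Function.onFun, Finset.disjoint_left]
      intro a ha hb
      simp only [Finset.mem_Ico] at ha hb
      rcases lt_or_gt_of_ne hij with h | h
      · have := mul_le_mul_left (show i + 1 ≤ j from h) (2*m)
        nlinarith [ha.2, hb.1, hi]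
      · have := mul_le_mul_left (show j + 1 ≤ i from h) (2*m)
        nlinarith [hb.2, ha.1, hj]
  have hgaps : {n : ℕ | n ∉ H₁} = ↑(Finset.range (2*m^2) \ S) := by
    ext n
    simp only [Set.mem_setOf_eq, Finset.coe_sdiff, Set.mem_diff, Finset.mem_coe,
      Finset.mem_range, hmem n, hSdef, Finset.mem_biUnion, Finset.mem_Ico]
    constructor
    · intro h
      refine ⟨?_, ?_⟩
      · by_contra hc
        exact h (pp_large hm (le_of_not_gt hc))
      · rintro ⟨k, hk, h1, h2⟩
        exact h ⟨k, h1, Nat.lt_add_one_iff.mp h2⟩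
    · rintro ⟨h1, h2⟩ ⟨k, hk1, hk2⟩
      rcases lt_or_ge k m with h | h
      · exact h2 ⟨k, Finset.mem_range.mp (Finset.mem_range.mpr h), hk1, Nat.lt_add_one_iff.mpr hk2⟩
      · have := mul_le_mul_left h (2*m)
        nlinarith [hk1, h1]
  refine ⟨?_, ?_, ?_⟩
  · rw [hgaps]; exact (Finset.range (2*m^2) \ S).finite_toSet
  · rw [hgaps, Set.ncard_coe_finset, Finset.card_sdiff_of_subset hS_sub, Finset.card_range,
      hS_card, hq4]
    generalize m^2 = x
    omega
  · clear hgaps hS_card hS_sub hSdef S hq4 hq1 hgen hH₁ hq ht hqm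
    intro n hn
    rw [hq2] at hn ⊢
    rw [hmem n, hmem (2*m^2 - 1 - n)]
    constructor
    · rintro ⟨k, h1, h2⟩ ⟨j, g1, g2⟩
      have hsub : n + (2*m^2 - 1 - n) = 2*m^2 - 1 := Nat.add_sub_cancel' hn
      refine F_gap hm ⟨k + j, ?_, ?_⟩
      · have := Nat.add_le_add h1 g1
        rw [add_mul]
        linarith [hsub]
      · have := Nat.add_le_add h2 g2
        rw [add_mul]
        linarith [hsub]
    · intro h
      by_contra hc
      exact h (pp_symm hm hn hc)
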